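/- arXiv:2407.16778 — 2 statements merged into one kernel-verified Lean document; each statement's English description precedes it below -/
import Mathlib

section
/- Let n ≥ 1, let p be an integer with 1 ≤ p ≤ n, let a, b ∈ ℝⁿ, let D be an n×n matrix with entries in ℝ ∪ {−∞}, and let x ∈ ℝⁿ satisfy D(i,j) ≤ x_i − x_j for all i, j (inequality in ℝ ∪ {−∞}). Then ⊕_p(i ↦ a_i + x_i) − ⊕_p(j ↦ b_j + x_j) ≥ MinMaxValue(F | p, n+1−p), where F is the n×n matrix over ℝ ∪ {−∞} with F(i,j) = a_i − b_j + D(i,j) (with −∞ + r = −∞). -/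
/-- The maxmin-`p` value of `s : Fin n → ℝ`: the `p`-th smallest element (1-indexed) of the
multiset `{s 0, …, s (n-1)}`, counted with multiplicity. -/
noncomputable def maxmin {n : ℕ} (p : ℕ) (s : Fin n → ℝ) : ℝ :=
  (Multiset.sort (Multiset.map s (Finset.univ : Finset (Fin n)).val) (· ≤ ·)).getD (p - 1) 0

/-- `MinMaxValue(F | p, n+1−p)`: the minimum over all pairs `(S₁, S₂)` of subsets of
`{1,…,n}` with `|S₁| = p` and `|S₂| = n+1−p` of `max_{(i,j) ∈ S₁×S₂} F i j`, where the
entries lie in `ℝ ∪ {−∞}` (modeled as `WithBot ℝ`). -/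
noncomputable def minMaxValue {n : ℕ} (p : ℕ) (F : Fin n → Fin n → WithBot ℝ) : WithBot ℝ :=
  sInf {v : WithBot ℝ | ∃ S₁ S₂ : Finset (Fin n), S₁.card = p ∧ S₂.card = n + 1 - p ∧
    v = (S₁ ×ˢ S₂).sup (fun q => F q.1 q.2)}

private lemma maxmin_count {n : ℕ} (s : Fin n → ℝ) (P : ℝ → Prop) [DecidablePred P] :
    ((Finset.univ.filter (fun i => P (s i))).card : ℕ) =
      (Multiset.sort (Multiset.map s (Finset.univ : Finset (Fin n)).val) (· ≤ ·)).countP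
        (fun v => decide (P v)) := by
  have h1 : (Finset.univ.filter (fun i => P (s i))).card
      = Multiset.countP P (Multiset.map s (Finset.univ : Finset (Fin n)).val) := by
    rw [Multiset.countP_map]
    rfl
  calc (Finset.univ.filter (fun i => P (s i))).card
      = Multiset.countP P (Multiset.map s (Finset.univ : Finset (Fin n)).val) := h1
    _ = Multiset.countP P
        ↑(Multiset.sort (Multiset.map s (Finset.univ : Finset (Fin n)).val) (· ≤ ·)) := by
        rw [Multiset.sort_eq]
    _ = _ := Multiset.coe_countP _ _

private lemma maxmin_sets {n p : ℕ} (hp1 : 1 ≤ p) (hpn : p ≤ n) (s : Fin n → ℝ) :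
    (∃ S : Finset (Fin n), S.card = p ∧ ∀ i ∈ S, s i ≤ maxmin p s) ∧
    (∃ T : Finset (Fin n), T.card = n + 1 - p ∧ ∀ j ∈ T, maxmin p s ≤ s j) := by
  classical
  set l := Multiset.sort (Multiset.map s (Finset.univ : Finset (Fin n)).val) (· ≤ ·) with hl
  have hlen : l.length = n := by simp [hl]
  have hsort : l.Pairwise (· ≤ ·) := Multiset.pairwise_sort _ _
  have hplt : p - 1 < l.length := by omega
  have hα : maxmin p s = l[p-1] := by
    rw [maxmin, List.getD_eq_getElem _ _ hplt]
  set α := maxmin p s with hαdef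
  have hmono : ∀ i j : ℕ, (hi : i ≤ j) → (hj : j < l.length) → l[i] ≤ l[j] := by
    intro i j hi hj
    exact List.Pairwise.rel_get_of_le hsort (a := ⟨i, by omega⟩) (b := ⟨j, hj⟩) hi
  constructor
  · -- the p smallest
    have hcard : p ≤ (Finset.univ.filter (fun i => s i ≤ α)).card := by
      rw [maxmin_count s (fun v => v ≤ α)]
      have htake : (l.take p).countP (fun v => decide (v ≤ α)) = p := by
        rw [List.countP_eq_length.mpr, List.length_take]
        · omega
        · intro v hv
          obtain ⟨i, hi, rfl⟩ := List.getElem_of_mem hv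
          rw [List.getElem_take]
          simp only [decide_eq_true_eq, hα]
          exact hmono _ _ (by simp at hi; omega) hplt
      calc p = (l.take p).countP (fun v => decide (v ≤ α)) := htake.symm
        _ ≤ l.countP (fun v => decide (v ≤ α)) := (List.take_sublist _ _).countP_le
    obtain ⟨S, hS, hScard⟩ := Finset.exists_subset_card_eq hcard
    exact ⟨S, hScard, fun i hi => by
      have := hS hi; simp only [Finset.mem_filter] at this; exact this.2⟩
  · -- the n+1-p largest
    have hcard : n + 1 - p ≤ (Finset.univ.filter (fun j => α ≤ s j)).card := by
      rw [maxmin_count s (fun v => α ≤ v)]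
      have hdrop : (l.drop (p-1)).countP (fun v => decide (α ≤ v)) = n + 1 - p := by
        rw [List.countP_eq_length.mpr, List.length_drop]
        · omega
        · intro v hv
          obtain ⟨i, hi, rfl⟩ := List.getElem_of_mem hv
          rw [List.getElem_drop]
          simp only [decide_eq_true_eq, hα]
          exact hmono _ _ (by omega) (by simp at hi; omega)
      calc n + 1 - p = (l.drop (p-1)).countP (fun v => decide (α ≤ v)) := hdrop.symm
        _ ≤ l.countP (fun v => decide (α ≤ v)) := (List.drop_sublist _ _).countP_le
    obtain ⟨T, hT, hTcard⟩ := Finset.exists_subset_card_eq hcard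
    exact ⟨T, hTcard, fun j hj => by
      have := hT hj; simp only [Finset.mem_filter] at this; exact this.2⟩

/-- If `x` lies in the zone of `D` (i.e. `D i j ≤ x i − x j` for all `i, j`), then
`⊕_p(i ↦ a i + x i) − ⊕_p(j ↦ b j + x j) ≥ MinMaxValue(F | p, n+1−p)` where
`F i j = a i − b j + D i j`. -/
theorem maxmin_diff_ge_minMaxValue (n p : ℕ) (hn : 1 ≤ n) (hp1 : 1 ≤ p) (hpn : p ≤ n)
    (a b : Fin n → ℝ) (D : Fin n → Fin n → WithBot ℝ) (x : Fin n → ℝ)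
    (hx : ∀ i j, D i j ≤ ((x i - x j : ℝ) : WithBot ℝ)) :
    minMaxValue p (fun i j => ((a i - b j : ℝ) : WithBot ℝ) + D i j) ≤
      ((maxmin p (fun i => a i + x i) - maxmin p (fun j => b j + x j) : ℝ) : WithBot ℝ) := by
  obtain ⟨⟨S₁, hS₁card, hS₁⟩, -⟩ := maxmin_sets hp1 hpn (fun i => a i + x i)
  obtain ⟨-, ⟨S₂, hS₂card, hS₂⟩⟩ := maxmin_sets hp1 hpn (fun j => b j + x j)
  set α := maxmin p (fun i => a i + x i)
  set β := maxmin p (fun j => b j + x j)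
  rw [minMaxValue]
  have hmem : (S₁ ×ˢ S₂).sup (fun q => ((a q.1 - b q.2 : ℝ) : WithBot ℝ) + D q.1 q.2) ∈
      {v : WithBot ℝ | ∃ T₁ T₂ : Finset (Fin n), T₁.card = p ∧ T₂.card = n + 1 - p ∧
        v = (T₁ ×ˢ T₂).sup (fun q => ((a q.1 - b q.2 : ℝ) : WithBot ℝ) + D q.1 q.2)} :=
    ⟨S₁, S₂, hS₁card, hS₂card, rfl⟩
  refine le_trans (csInf_le (OrderBot.bddBelow _) hmem) ?_
  refine Finset.sup_le fun q hq => ?_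
  obtain ⟨hq1, hq2⟩ := Finset.mem_product.mp hq
  have h1 : ((a q.1 - b q.2 : ℝ) : WithBot ℝ) + D q.1 q.2
      ≤ ((a q.1 - b q.2 : ℝ) : WithBot ℝ) + ((x q.1 - x q.2 : ℝ) : WithBot ℝ) :=
    add_le_add_right (hx q.1 q.2) _
  refine h1.trans ?_
  rw [← WithBot.coe_add, WithBot.coe_le_coe]
  have := hS₁ q.1 hq1
  have := hS₂ q.2 hq2
  linarith
end

section
/- Let n ≥ 1, let p be an integer with 1 ≤ p ≤ n, let A and D be n×n real matrices, and suppose x ∈ ℝⁿ satisfies x_i − x_j ≥ D(i,j) for all i, j. Define L(i,j) := ⊕_p(l ↦ A(i,l) + D(l,j)) and U(i,j) := ⊕_p(l ↦ A(i,l) − D(j,l)). If i, j ∈ {1,…,n} satisfy A(i,j) = L(i,j) = U(i,j), then (i,j) is an active entry of A with respect to p and x, i.e., (A ⊗_p x)_i = A(i,j) + x_j. -/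
/-- The maxmin-`p` matrix-vector product: `(A ⊗_p x)_i = ⊕_p (j ↦ A i j + x j)`. -/
noncomputable def mmProd {n : ℕ} (p : ℕ) (A : Fin n → Fin n → ℝ) (x : Fin n → ℝ) :
    Fin n → ℝ :=
  fun i => maxmin p (fun j => A i j + x j)

/-- On a sorted list, if at least `k+1` elements are `≤ t`, then the `k`-th element is `≤ t`. -/
lemma sorted_getD_le_of_countP {L : List ℝ} (hs : L.Pairwise (· ≤ ·)) {k : ℕ}
    (hk : k < L.length) {t : ℝ} (h : k < L.countP (fun a => decide (a ≤ t))) :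
    L.getD k 0 ≤ t := by
  by_contra h'
  push_neg at h'
  rw [List.getD_eq_getElem _ _ hk] at h'
  have hsplit : L = L.take k ++ L.drop k := (List.take_append_drop k L).symm
  have hdrop : (L.drop k).countP (fun a => decide (a ≤ t)) = 0 := by
    rw [List.countP_eq_zero]
    intro a ha
    rw [List.mem_iff_getElem] at ha
    obtain ⟨m, hm, rfl⟩ := ha
    have hkm : k + m < L.length := by rw [List.length_drop] at hm; omega
    rw [List.getElem_drop]
    have hle : L[k] ≤ L[k + m] :=
      List.Pairwise.rel_get_of_le hs (a := ⟨k, hk⟩) (b := ⟨k + m, hkm⟩) (by simp)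
    simp only [decide_eq_true_eq]
    exact fun hle2 => absurd (le_trans hle hle2) (not_le.2 h')
  have : L.countP (fun a => decide (a ≤ t)) ≤ k := by
    conv_lhs => rw [hsplit]
    rw [List.countP_append, hdrop, Nat.add_zero]
    exact (List.countP_le_length).trans (by simp)
  omega

/-- On a sorted list, at least `k+1` elements are `≤` the `k`-th element. -/
lemma sorted_lt_countP {L : List ℝ} (hs : L.Pairwise (· ≤ ·)) {k : ℕ}
    (hk : k < L.length) : k < L.countP (fun a => decide (a ≤ L.getD k 0)) := by
  rw [List.getD_eq_getElem _ _ hk]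
  have hsplit : L = L.take (k + 1) ++ L.drop (k + 1) := (List.take_append_drop _ L).symm
  have htake : (L.take (k + 1)).countP (fun a => decide (a ≤ L[k])) = k + 1 := by
    rw [List.countP_eq_length.2, List.length_take]
    · omega
    · intro a ha
      rw [List.mem_iff_getElem] at ha
      obtain ⟨m, hm, rfl⟩ := ha
      have hm' : m < L.length := lt_of_lt_of_le hm (by rw [List.length_take]; omega)
      have hmk : m ≤ k := by rw [List.length_take] at hm; omega
      rw [List.getElem_take]
      exact decide_eq_true (List.Pairwise.rel_get_of_le hs (a := ⟨m, hm'⟩) (b := ⟨k, hk⟩) (by simpa))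
  calc k < k + 1 := Nat.lt_succ_self k
    _ = (L.take (k + 1)).countP (fun a => decide (a ≤ L[k])) := htake.symm
    _ ≤ L.countP (fun a => decide (a ≤ L[k])) :=
        List.Sublist.countP_le (List.take_sublist _ _)

lemma maxmin_mono {n p : ℕ} (hp1 : 1 ≤ p) (hpn : p ≤ n) {f g : Fin n → ℝ}
    (h : ∀ l, f l ≤ g l) : maxmin p f ≤ maxmin p g := by
  classical
  set Lf := Multiset.sort (Multiset.map f (Finset.univ : Finset (Fin n)).val) (· ≤ ·) with hLf
  set Lg := Multiset.sort (Multiset.map g (Finset.univ : Finset (Fin n)).val) (· ≤ ·) with hLg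
  have hlenf : Lf.length = n := by simp [hLf, Multiset.length_sort]
  have hleng : Lg.length = n := by simp [hLg, Multiset.length_sort]
  have hk : p - 1 < n := by omega
  set t := Lg.getD (p - 1) 0 with ht
  have h1 : p - 1 < Lg.countP (fun a => decide (a ≤ t)) :=
    sorted_lt_countP (Multiset.pairwise_sort _ _) (by rw [← hLg, hleng]; omega)
  have h2 : Lg.countP (fun a => decide (a ≤ t)) ≤ Lf.countP (fun a => decide (a ≤ t)) := by
    have e1 : Lg.countP (fun a => decide (a ≤ t)) =
        Multiset.countP (· ≤ t) (Multiset.map g Finset.univ.val) := by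
      rw [← Multiset.coe_countP, hLg, Multiset.sort_eq]
    have e2 : Lf.countP (fun a => decide (a ≤ t)) =
        Multiset.countP (· ≤ t) (Multiset.map f Finset.univ.val) := by
      rw [← Multiset.coe_countP, hLf, Multiset.sort_eq]
    rw [e1, e2, Multiset.countP_map, Multiset.countP_map]
    exact Multiset.card_le_card (Multiset.monotone_filter_right _
      (fun a ha => le_trans (h a) ha))
  exact sorted_getD_le_of_countP (Multiset.pairwise_sort _ _) (by rw [← hLf, hlenf]; omega) (lt_of_lt_of_le h1 h2)

lemma maxmin_add_const {n p : ℕ} (hp1 : 1 ≤ p) (hpn : p ≤ n) (f : Fin n → ℝ) (c : ℝ) :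
    maxmin p (fun l => f l + c) = maxmin p f + c := by
  classical
  set L := Multiset.sort (Multiset.map f (Finset.univ : Finset (Fin n)).val) (· ≤ ·) with hLdef
  have hlen : L.length = n := by simp [hLdef, Multiset.length_sort]
  have hcoe : ((L.map (· + c) : List ℝ) : Multiset ℝ) =
      Multiset.map (fun l => f l + c) (Finset.univ : Finset (Fin n)).val := by
    rw [← Multiset.map_coe, hLdef, Multiset.sort_eq, Multiset.map_map]
    rfl
  have hsorted : (L.map (· + c)).Pairwise (· ≤ ·) :=
    List.Pairwise.map _ (fun {a b} hab => add_le_add_left hab c)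
      (Multiset.pairwise_sort _ _)
  have hsort : Multiset.sort
      (Multiset.map (fun l => f l + c) (Finset.univ : Finset (Fin n)).val) (· ≤ ·) = L.map (· + c) := by
    apply List.Perm.eq_of_pairwise' (Multiset.pairwise_sort _ _) hsorted
    rw [← Multiset.coe_eq_coe, Multiset.sort_eq, hcoe]
  have hk : p - 1 < n := by omega
  unfold maxmin
  rw [hsort, List.getD_eq_getElem _ _ (by simp; omega),
    List.getD_eq_getElem _ _ (by omega : p - 1 < L.length), List.getElem_map]

/-- If `A i j = L i j = U i j`, where `L i j := ⊕_p(l ↦ A i l + D l j)` and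
`U i j := ⊕_p(l ↦ A i l − D j l)`, then `(i,j)` is an active entry of `A` with respect to
`p` and any `x` in the zone of `D`: `(A ⊗_p x)_i = A i j + x j`. -/
theorem active_entry_of_LU (n p : ℕ) (hn : 1 ≤ n) (hp1 : 1 ≤ p) (hpn : p ≤ n)
    (A D : Fin n → Fin n → ℝ) (x : Fin n → ℝ)
    (hzone : ∀ i j, x i - x j ≥ D i j)
    (i j : Fin n)
    (hL : A i j = maxmin p (fun l => A i l + D l j))
    (hU : A i j = maxmin p (fun l => A i l - D j l)) :
    mmProd p A x i = A i j + x j := by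
  have key1 : maxmin p (fun l => A i l + D l j) ≤
      maxmin p (fun l => (A i l + x l) + (-x j)) :=
    maxmin_mono hp1 hpn (fun l => by have := hzone l j; linarith)
  have key2 : maxmin p (fun l => (A i l + x l) + (-x j)) ≤
      maxmin p (fun l => A i l - D j l) :=
    maxmin_mono hp1 hpn (fun l => by have := hzone j l; linarith)
  have htrans : maxmin p (fun l => (A i l + x l) + (-x j)) =
      maxmin p (fun l => A i l + x l) + (-x j) :=
    maxmin_add_const hp1 hpn (fun l => A i l + x l) (-x j)
  rw [htrans] at key1 key2
  have : maxmin p (fun l => A i l + x l) = A i j + x j := by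
    rw [← hL] at key1; rw [← hU] at key2; linarith
  simpa [mmProd] using this
end
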